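/- Suppose A and B are symmetric n×n matrices with 0 ⪯ A ⪯ I and A ≈_ε B for some 0 < ε ≤ 1/2, and suppose 0 < θ ≤ 1/2 satisfies ε/θ ≤ 1/10. Then I - (1-θ)A ≈_{3ε/θ} I - (1-θ)B, i.e., exp(-3ε/θ)(I - (1-θ)A) ⪯ I - (1-θ)B ⪯ exp(3ε/θ)(I - (1-θ)A). -/

import Mathlib

set_option maxHeartbeats 1000000

theorem stmt_8 (n : ℕ) (ε θ : ℝ) (A B : Matrix (Fin n) (Fin n) ℝ)
    (hAsymm : A.IsSymm) (hBsymm : B.IsSymm)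
    (hA0 : A.PosSemidef) (hA1 : ((1 : Matrix (Fin n) (Fin n) ℝ) - A).PosSemidef)
    (hε : 0 < ε) (hε' : ε ≤ 1 / 2)
    (hθ : 0 < θ) (hθ' : θ ≤ 1 / 2) (hεθ : ε / θ ≤ 1 / 10)
    (h1 : (B - Real.exp (-ε) • A).PosSemidef)
    (h2 : (Real.exp ε • A - B).PosSemidef) :
    (((1 : Matrix (Fin n) (Fin n) ℝ) - (1 - θ) • B) -
        Real.exp (-(3 * ε / θ)) • ((1 : Matrix (Fin n) (Fin n) ℝ) - (1 - θ) • A)).PosSemidef ∧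
      (Real.exp (3 * ε / θ) • ((1 : Matrix (Fin n) (Fin n) ℝ) - (1 - θ) • A) -
        ((1 : Matrix (Fin n) (Fin n) ℝ) - (1 - θ) • B)).PosSemidef := by
  set t : ℝ := 3 * ε / θ with ht
  have htθ : t * θ = 3 * ε := by rw [ht, div_mul_cancel₀ _ hθ.ne']
  have ht10 : t ≤ 3 / 10 := by rw [ht, mul_div_assoc]; nlinarith
  have ht0 : 0 < t := by positivity
  have hεθ' : ε ≤ θ / 10 := by
    rw [div_le_div_iff₀ hθ (by norm_num)] at hεθ; linarith
  -- exponential bounds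
  have hmul1 : Real.exp ε * Real.exp (-ε) = 1 := by rw [← Real.exp_add]; simp
  have hmul2 : Real.exp t * Real.exp (-t) = 1 := by rw [← Real.exp_add]; simp
  have hE1 : Real.exp ε * (1 - ε) ≤ 1 := by
    nlinarith [Real.add_one_le_exp (-ε), Real.exp_pos ε,
      mul_le_mul_of_nonneg_left (Real.add_one_le_exp (-ε)) (Real.exp_pos ε).le]
  have hE2 : 1 - ε ≤ Real.exp (-ε) := by nlinarith [Real.add_one_le_exp (-ε)]
  have hE3 : 1 + t ≤ Real.exp t := by nlinarith [Real.add_one_le_exp t]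
  have hE4 : Real.exp (-t) * (1 + t) ≤ 1 := by
    nlinarith [Real.add_one_le_exp t, Real.exp_pos (-t),
      mul_le_mul_of_nonneg_left (Real.add_one_le_exp t) (Real.exp_pos (-t)).le]
  have key1 : 1 ≤ θ * Real.exp t + (1 - θ) * Real.exp (-ε) := by
    nlinarith [mul_le_mul_of_nonneg_left hE3 hθ.le,
      mul_le_mul_of_nonneg_left hE2 (by linarith : (0:ℝ) ≤ 1 - θ)]
  have key2 : (1 - θ) * Real.exp ε + θ * Real.exp (-t) ≤ 1 := by
    nlinarith [mul_le_mul_of_nonneg_right hE1 (by nlinarith : (0:ℝ) ≤ (1-θ)*(1+t)),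
      mul_le_mul_of_nonneg_right hE4 (by nlinarith : (0:ℝ) ≤ θ*(1-ε)),
      mul_pos (by linarith : (0:ℝ) < 1-ε) (by linarith : (0:ℝ) < 1+t),
      Real.exp_pos ε, Real.exp_pos (-t)]
  have hEle : Real.exp (-t) ≤ Real.exp ε := Real.exp_le_exp.mpr (by linarith)
  -- Hermitian facts
  have hA : A.IsHermitian := hA0.1
  have hB : B.IsHermitian := by
    rw [Matrix.IsHermitian, Matrix.conjTranspose_eq_transpose_of_trivial]; exact hBsymm
  have hA' : A.conjTranspose = A := hA
  have hB' : B.conjTranspose = B := hB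
  have hAt : A.transpose = A := hAsymm
  have hBt : B.transpose = B := hBsymm
  have herm1 : (((1 : Matrix (Fin n) (Fin n) ℝ) - (1 - θ) • B) -
      Real.exp (-t) • ((1 : Matrix (Fin n) (Fin n) ℝ) - (1 - θ) • A)).IsHermitian := by
    simp [Matrix.IsHermitian, Matrix.conjTranspose_sub, Matrix.conjTranspose_smul, hA', hB', hAt, hBt]
  have herm2 : (Real.exp t • ((1 : Matrix (Fin n) (Fin n) ℝ) - (1 - θ) • A) -
      ((1 : Matrix (Fin n) (Fin n) ℝ) - (1 - θ) • B)).IsHermitian := by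
    simp [Matrix.IsHermitian, Matrix.conjTranspose_sub, Matrix.conjTranspose_smul, hA', hB', hAt, hBt]
  refine ⟨.of_dotProduct_mulVec_nonneg herm1 fun x => ?_, .of_dotProduct_mulVec_nonneg herm2 fun x => ?_⟩ <;>
  · have ha0 := hA0.dotProduct_mulVec_nonneg x
    have ha1 := hA1.dotProduct_mulVec_nonneg x
    have hb1 := h1.dotProduct_mulVec_nonneg x
    have hb2 := h2.dotProduct_mulVec_nonneg x
    have hs : (0:ℝ) ≤ dotProduct (star x) x := by
      simpa using dotProduct_star_self_nonneg x
    simp only [Matrix.sub_mulVec, Matrix.smul_mulVec, Matrix.one_mulVec,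
      dotProduct_sub, dotProduct_smul, smul_eq_mul] at ha0 ha1 hb1 hb2 ⊢
    set s : ℝ := dotProduct (star x) x with hsdef
    set a : ℝ := dotProduct (star x) (A.mulVec x) with hadef
    set b : ℝ := dotProduct (star x) (B.mulVec x) with hbdef
    clear_value s a b
    · nlinarith [mul_nonneg (by linarith : (0:ℝ) ≤ 1 - θ)
        (by linarith : (0:ℝ) ≤ Real.exp ε * a - b),
      mul_nonneg (by linarith : (0:ℝ) ≤ 1 - θ)
        (by linarith : (0:ℝ) ≤ b - Real.exp (-ε) * a),
      mul_nonneg (mul_nonneg (by linarith : (0:ℝ) ≤ s - a) (by linarith : (0:ℝ) ≤ 1 - θ))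
        (by linarith : (0:ℝ) ≤ Real.exp ε - Real.exp (-t)),
      mul_nonneg (mul_nonneg (by linarith : (0:ℝ) ≤ s - a) (by linarith : (0:ℝ) ≤ 1 - θ))
        (by have := Real.exp_le_exp.mpr (show -ε ≤ t by linarith); linarith : (0:ℝ) ≤ Real.exp t - Real.exp (-ε)),
      mul_nonneg hs (by linarith : (0:ℝ) ≤ 1 - ((1-θ) * Real.exp ε + θ * Real.exp (-t))),
      mul_nonneg hs (by linarith : (0:ℝ) ≤ θ * Real.exp t + (1-θ) * Real.exp (-ε) - 1)]
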